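/- Let n ≥ 1, let w : ℝ → ℝ be n times continuously differentiable on [-1,1] with w⁽ᵏ⁾(−1) = w⁽ᵏ⁾(1) = 0 for every k = 0, 1, …, n−1 and ∫_{-1}^{1} w(t) dt = 1, and let f : ℝ → ℝ be n times continuously differentiable. Then for every x₀ ∈ ℝ, the limit as h → 0⁺ of (−1/h)ⁿ ∫_{-1}^{1} w⁽ⁿ⁾(t) f(x₀ + h t) dt exists and equals f⁽ⁿ⁾(x₀). -/

import Mathlib

open Filter Topology intervalIntegral Set

/-- n-th order differentiation by integration: if `w` is n-times continuously differentiable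
on `[-1,1]` with `w⁽ᵏ⁾(±1) = 0` for all `k < n` and `∫_{-1}^{1} w = 1`, then for every
n-times continuously differentiable `f`,
`(−1/h)ⁿ ∫_{-1}^{1} w⁽ⁿ⁾(t) f(x₀+ht) dt → f⁽ⁿ⁾(x₀)` as `h → 0⁺`. -/
theorem lanczos_general_nth_derivative (n : ℕ) (hn : 1 ≤ n) (w f : ℝ → ℝ)
    (hw : ContDiffOn ℝ (n : ℕ∞) w (Icc (-1 : ℝ) 1))
    (hvanish : ∀ k < n, iteratedDerivWithin k w (Icc (-1 : ℝ) 1) (-1) = 0 ∧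
      iteratedDerivWithin k w (Icc (-1 : ℝ) 1) 1 = 0)
    (hint : ∫ t in (-1 : ℝ)..1, w t = 1)
    (hf : ContDiff ℝ (n : ℕ∞) f) (x₀ : ℝ) :
    Tendsto (fun h : ℝ => (-1 / h) ^ n *
        ∫ t in (-1 : ℝ)..1, iteratedDerivWithin n w (Icc (-1 : ℝ) 1) t * f (x₀ + h * t))
      (𝓝[>] (0 : ℝ)) (𝓝 (iteratedDeriv n f x₀)) := by
  set s : Set ℝ := Icc (-1 : ℝ) 1 with hs_def
  have hs : UniqueDiffOn ℝ s := uniqueDiffOn_Icc (by norm_num)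
  have huIcc : uIcc (-1 : ℝ) 1 = s := uIcc_of_le (by norm_num)
  set u : ℕ → ℝ → ℝ := fun k => iteratedDerivWithin k w s with hu_def
  -- continuity of the iterated derivatives of w on s
  have cont_u : ∀ k ≤ n, ContinuousOn (u k) s := fun k hk =>
    hw.continuousOn_iteratedDerivWithin (by exact_mod_cast hk) hs
  -- derivative of u k within s
  have deriv_u : ∀ k, k < n → ∀ t ∈ Ioo (-1 : ℝ) 1, HasDerivAt (u k) (u (k + 1) t) t := by
    intro k hk t ht
    have hts : t ∈ s := Ioo_subset_Icc_self ht
    have hmem : s ∈ 𝓝 t := Icc_mem_nhds ht.1 ht.2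
    have hd : DifferentiableWithinAt ℝ (u k) s t :=
      (hw.differentiableOn_iteratedDerivWithin (by exact_mod_cast hk) hs) t hts
    have h1 : HasDerivWithinAt (u k) (derivWithin (u k) s t) s t := hd.hasDerivWithinAt
    rw [← iteratedDerivWithin_succ] at h1
    exact h1.hasDerivAt hmem
  -- integration by parts step
  have parts : ∀ k, k < n → ∀ G G' : ℝ → ℝ, Continuous G → Continuous G' →
      (∀ x, HasDerivAt G (G' x) x) →
      (∫ t in (-1 : ℝ)..1, u (k + 1) t * G t) = -∫ t in (-1 : ℝ)..1, u k t * G' t := by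
    intro k hk G G' hGc hG'c hGd
    have hint1 : IntervalIntegrable (fun t => u (k + 1) t * G t) MeasureTheory.volume (-1) 1 := by
      apply ContinuousOn.intervalIntegrable
      rw [huIcc]
      exact (cont_u (k + 1) hk).mul hGc.continuousOn
    have hint2 : IntervalIntegrable (fun t => u k t * G' t) MeasureTheory.volume (-1) 1 := by
      apply ContinuousOn.intervalIntegrable
      rw [huIcc]
      exact (cont_u k hk.le).mul hG'c.continuousOn
    have hv1 : u k (-1) = 0 := (hvanish k hk).1
    have hv2 : u k 1 = 0 := (hvanish k hk).2
    have key : (∫ t in (-1 : ℝ)..1, (u (k + 1) t * G t + u k t * G' t)) =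
        u k 1 * G 1 - u k (-1) * G (-1) :=
      integral_eq_sub_of_hasDeriv_right_of_le (f := fun t => u k t * G t)
        (f' := fun t => u (k + 1) t * G t + u k t * G' t) (by norm_num)
        ((cont_u k hk.le).mul hGc.continuousOn)
        (fun x hx => (((deriv_u k hk x hx).mul (hGd x))).hasDerivWithinAt)
        (hint1.add hint2)
    rw [integral_add hint1 hint2, hv1, hv2] at key
    simp only [zero_mul, sub_zero, zero_sub, sub_self] at key
    linarith [key]
  -- iterated integration by parts
  have iter : ∀ (g : ℝ → ℝ), ContDiff ℝ (n : ℕ∞) g → ∀ k, k ≤ n →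
      (∫ t in (-1 : ℝ)..1, u n t * g t) =
        (-1 : ℝ) ^ k * ∫ t in (-1 : ℝ)..1, u (n - k) t * iteratedDeriv k g t := by
    intro g hg
    intro k
    induction k with
    | zero => intro _; simp
    | succ k ih =>
      intro hk1
      have hk : k < n := hk1
      rw [ih hk.le]
      have hnk : n - k = (n - (k + 1)) + 1 := by omega
      have hlt : n - (k + 1) < n := by omega
      have hGc : Continuous (iteratedDeriv k g) :=
        hg.continuous_iteratedDeriv k (by exact_mod_cast hk.le)
      have hG'c : Continuous (iteratedDeriv (k + 1) g) :=
        hg.continuous_iteratedDeriv (k + 1) (by exact_mod_cast hk1)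
      have hGd : ∀ x, HasDerivAt (iteratedDeriv k g) (iteratedDeriv (k + 1) g x) x := by
        intro x
        have hdiff : Differentiable ℝ (iteratedDeriv k g) :=
          hg.differentiable_iteratedDeriv k (by exact_mod_cast hk)
        have := (hdiff x).hasDerivAt
        rwa [show deriv (iteratedDeriv k g) x = iteratedDeriv (k + 1) g x by
          rw [iteratedDeriv_succ]] at this
      rw [hnk]
      rw [parts (n - (k + 1)) hlt (iteratedDeriv k g) (iteratedDeriv (k + 1) g) hGc hG'c hGd]
      ring
  -- the limit function
  have hD : Continuous (iteratedDeriv n f) := hf.continuous_iteratedDeriv n le_rfl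
  -- continuous extension of w
  set c : ℝ → ℝ := fun t => max (-1) (min 1 t) with hc_def
  have hc_cont : Continuous c := (continuous_const.max (continuous_const.min continuous_id))
  have hc_mem : ∀ t, c t ∈ s := by
    intro t
    constructor
    · exact le_max_left _ _
    · simp only [hc_def, max_le_iff]
      constructor <;> [norm_num; exact min_le_left _ _]
  have hc_eq : ∀ t ∈ s, c t = t := by
    intro t ht
    simp only [hc_def]
    rw [min_eq_right ht.2, max_eq_right ht.1]
  set W : ℝ → ℝ := fun t => w (c t) with hW_def
  have hWc : Continuous W := (hw.continuousOn).comp_continuous hc_cont hc_mem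
  have hWeq : ∀ t ∈ s, W t = w t := fun t ht => by simp only [hW_def]; rw [hc_eq t ht]
  -- the limit
  have hlim : Tendsto (fun h : ℝ => ∫ t in (-1 : ℝ)..1, W t * iteratedDeriv n f (x₀ + h * t))
      (𝓝[>] (0 : ℝ)) (𝓝 (iteratedDeriv n f x₀)) := by
    have hcont : Continuous (fun h : ℝ => ∫ t in (-1 : ℝ)..1, W t * iteratedDeriv n f (x₀ + h * t)) := by
      apply intervalIntegral.continuous_parametric_intervalIntegral_of_continuous'
        (f := fun (h : ℝ) (t : ℝ) => W t * iteratedDeriv n f (x₀ + h * t))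
      apply Continuous.mul
      · exact hWc.comp continuous_snd
      · exact hD.comp (continuous_const.add (continuous_fst.mul continuous_snd))
    have h0 : (∫ t in (-1 : ℝ)..1, W t * iteratedDeriv n f (x₀ + (0 : ℝ) * t)) =
        iteratedDeriv n f x₀ := by
      simp only [zero_mul, add_zero]
      rw [intervalIntegral.integral_mul_const]
      have : (∫ t in (-1 : ℝ)..1, W t) = 1 := by
        rw [intervalIntegral.integral_congr (g := w) (fun t ht => hWeq t (huIcc ▸ ht))]
        exact hint
      rw [this, one_mul]
    have := hcont.tendsto 0
    rw [h0] at this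
    exact this.mono_left nhdsWithin_le_nhds
  -- show the original function agrees with the W-integral on 𝓝[>] 0
  apply hlim.congr'
  filter_upwards [self_mem_nhdsWithin] with h (hh : 0 < h)
  -- compute for fixed h > 0
  set g : ℝ → ℝ := fun t => f (x₀ + h * t) with hg_def
  have hgC : ContDiff ℝ (n : ℕ∞) g := by
    apply hf.comp
    exact contDiff_const.add (contDiff_const.mul contDiff_id)
  have hgd : iteratedDeriv n g = fun t => h ^ n * iteratedDeriv n f (x₀ + h * t) := by
    have e1 : g = fun t => (fun z => f (x₀ + z)) (h * t) := by
      funext t; simp [hg_def]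
    rw [e1, iteratedDeriv_comp_const_mul (n := n) (f := fun z => f (x₀ + z)) ?_ h]
    · funext t
      rw [iteratedDeriv_comp_const_add (n := n) (f := f) (s := x₀)]
    · exact hf.comp (contDiff_const.add contDiff_id)
  have key := iter g hgC n le_rfl
  rw [Nat.sub_self] at key
  simp only [hu_def, iteratedDerivWithin_zero] at key
  rw [hgd] at key
  have e2 : (∫ t in (-1 : ℝ)..1, W t * iteratedDeriv n f (x₀ + h * t)) =
      ∫ t in (-1 : ℝ)..1, w t * iteratedDeriv n f (x₀ + h * t) := by
    apply intervalIntegral.integral_congr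
    intro t ht
    simp only [hWeq t (huIcc ▸ ht)]
  rw [e2]
  have e3 : (∫ t in (-1 : ℝ)..1, w t * (h ^ n * iteratedDeriv n f (x₀ + h * t))) =
      h ^ n * ∫ t in (-1 : ℝ)..1, w t * iteratedDeriv n f (x₀ + h * t) := by
    rw [← intervalIntegral.integral_const_mul]
    congr 1
    funext t
    ring
  rw [e3] at key
  -- key : ∫ u n t * g t = (-1)^n * (h^n * ∫ w t * D (x₀ + h t))
  show ∫ t in (-1 : ℝ)..1, w t * iteratedDeriv n f (x₀ + h * t) =
    (-1 / h) ^ n * ∫ t in (-1 : ℝ)..1, u n t * g t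
  rw [key]
  have hh' : h ≠ 0 := ne_of_gt hh
  field_simp
  ring_nf
  rw [mul_comm n 2, pow_mul, neg_one_sq, one_pow, mul_one, mul_comm (h ^ n), mul_assoc, ← mul_pow, mul_inv_cancel₀ hh', one_pow, mul_one]
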